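/- The Z-module Z/8Z equipped with the topology G̃(M) = {∅, Z/8Z, {1,3,5,7}, {1,5}, {3,7}} is not a topological abelian group: the addition map μ : M × M → M is not continuous, since μ⁻¹({1,5}) is not open in the product topology. -/
import Mathlib

lemma zmod8_golomb_key :
    ∀ U : Set (ZMod 8), TopologicalSpace.GenerateOpen
      {∅, Set.univ, {1, 3, 5, 7}, {1, 5}, {3, 7}} U → (0 : ZMod 8) ∈ U → (2 : ZMod 8) ∈ U := by
  intro U hU
  induction hU with
  | basic s hs =>
      intro h0
      simp only [Set.mem_insert_iff, Set.mem_singleton_iff] at hs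
      rcases hs with rfl | rfl | rfl | rfl | rfl
      · exact absurd h0 (by decide)
      · trivial
      · exact absurd h0 (by decide)
      · exact absurd h0 (by decide)
      · exact absurd h0 (by decide)
  | univ => intro _; trivial
  | inter s t _ _ ihs iht => intro h0; exact ⟨ihs h0.1, iht h0.2⟩
  | sUnion S _ ih =>
      rintro ⟨s, hs, h0⟩
      exact ⟨s, hs, ih s hs h0⟩

/-- `ℤ/8ℤ` with the Golomb topology `{∅, ℤ/8ℤ, {1,3,5,7}, {1,5}, {3,7}}` is not a
topological abelian group: the preimage of `{1,5}` under addition is not open in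
the product topology, hence addition is not continuous. -/
theorem zmod8_golomb_not_topological_group :
    letI t : TopologicalSpace (ZMod 8) := TopologicalSpace.generateFrom
      {∅, Set.univ, {1, 3, 5, 7}, {1, 5}, {3, 7}}
    letI tp : TopologicalSpace (ZMod 8 × ZMod 8) := @instTopologicalSpaceProd _ _ t t
    ¬ tp.IsOpen ((fun p : ZMod 8 × ZMod 8 => p.1 + p.2) ⁻¹' ({1, 5} : Set (ZMod 8))) ∧
    ¬ @Continuous (ZMod 8 × ZMod 8) (ZMod 8) tp t (fun p => p.1 + p.2) := by
  letI t : TopologicalSpace (ZMod 8) := TopologicalSpace.generateFrom {∅, Set.univ, {1, 3, 5, 7}, {1, 5}, {3, 7}}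
  letI tp : TopologicalSpace (ZMod 8 × ZMod 8) := @instTopologicalSpaceProd _ _ t t
  have hnot : ¬ tp.IsOpen ((fun p : ZMod 8 × ZMod 8 => p.1 + p.2) ⁻¹' ({1, 5} : Set (ZMod 8))) := by
    intro hopen
    have hmem : ((0 : ZMod 8), (1 : ZMod 8)) ∈
        ((fun p : ZMod 8 × ZMod 8 => p.1 + p.2) ⁻¹' ({1, 5} : Set (ZMod 8))) := by simp
    obtain ⟨U, V, hU, hV, h0U, h1V, hsub⟩ := (@isOpen_prod_iff _ _ t t).mp hopen 0 1 hmem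
    have h2U : (2 : ZMod 8) ∈ U := zmod8_golomb_key U hU h0U
    have : ((2 : ZMod 8), (1 : ZMod 8)) ∈
        ((fun p : ZMod 8 × ZMod 8 => p.1 + p.2) ⁻¹' ({1, 5} : Set (ZMod 8))) :=
      hsub ⟨h2U, h1V⟩
    simp only [Set.mem_preimage, Set.mem_insert_iff, Set.mem_singleton_iff] at this
    revert this; decide
  refine ⟨hnot, fun hc => hnot ?_⟩
  exact hc.isOpen_preimage _ (TopologicalSpace.GenerateOpen.basic _ (by simp))
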